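/- Let η > 0, r ≥ 0 an integer, and let x: [0,∞) → (0,∞) solve the ODE x'(t) = −x(t)²/(r·x(t) + η) with x(0) = λ₁ > 0. For a > 0 and ε > 0 with a + ε·η ≤ λ₁, the time t⋆ at which x(t⋆) = a + ε·η satisfies t⋆ ≤ r·log(λ₁/a) + 1/ε. -/

import Mathlib

/-- Hitting-time bound for the ODE `x' = −x²/(rx + η)`: the time `t⋆` at which
the solution reaches `a + εη` satisfies `t⋆ ≤ r log(λ₁/a) + 1/ε`. -/
theorem ode_hitting_time_bound
    (r : ℕ) (η lam1 a ε : ℝ) (hη : 0 < η) (hlam1 : 0 < lam1)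
    (ha : 0 < a) (hε : 0 < ε) (hle : a + ε * η ≤ lam1)
    (x : ℝ → ℝ)
    (hx0 : x 0 = lam1)
    (hxpos : ∀ t, 0 ≤ t → 0 < x t)
    (hode : ∀ t, 0 ≤ t → HasDerivAt x (-(x t) ^ 2 / (r * x t + η)) t)
    (tstar : ℝ) (htstar : 0 ≤ tstar) (hhit : x tstar = a + ε * η) :
    tstar ≤ r * Real.log (lam1 / a) + 1 / ε := by
  set g : ℝ → ℝ := fun s => η / x s - r * Real.log (x s) - s with hg
  have hderiv : ∀ t, 0 ≤ t → HasDerivAt g 0 t := by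
    intro t ht
    have hxp := hxpos t ht
    have hxne : x t ≠ 0 := ne_of_gt hxp
    have hdenpos : (0:ℝ) < r * x t + η := by positivity
    have hd := hode t ht
    set d : ℝ := -(x t) ^ 2 / (r * x t + η) with hdd
    have hA : HasDerivAt (fun s => η / x s) (η * (-d / x t ^ 2)) t := by
      simpa [div_eq_mul_inv] using (hd.inv hxne).const_mul η
    have hB : HasDerivAt (fun s => (r : ℝ) * Real.log (x s)) ((r : ℝ) * (d / x t)) t :=
      (hd.log hxne).const_mul _
    have hC : HasDerivAt (fun s : ℝ => s) 1 t := hasDerivAt_id t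
    have h := (hA.sub hB).sub hC
    have hzero : η * (-d / x t ^ 2) - (r : ℝ) * (d / x t) - 1 = 0 := by
      rw [hdd]
      field_simp
      ring
    rw [hzero] at h
    exact h
  have hconst : ∀ t ∈ Set.Icc (0:ℝ) tstar, g t = g 0 := by
    apply constant_of_has_deriv_right_zero
    · intro s hs
      exact (hderiv s hs.1).continuousAt.continuousWithinAt
    · intro s hs
      exact (hderiv s hs.1).hasDerivWithinAt
  have hgt := hconst tstar ⟨htstar, le_refl _⟩
  have hx0p : 0 < x 0 := hxpos 0 le_rfl
  -- expand g
  have key : η / (a + ε * η) - r * Real.log (a + ε * η) - tstar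
      = η / lam1 - r * Real.log lam1 := by
    simpa [hg, hhit, hx0] using hgt
  have htstar_eq : tstar = η / (a + ε * η) - η / lam1
      + r * (Real.log lam1 - Real.log (a + ε * η)) := by linarith
  have haε : 0 < a + ε * η := by positivity
  have h1 : η / (a + ε * η) ≤ 1 / ε := by
    have : η / (a + ε * η) ≤ η / (ε * η) := by
      apply div_le_div_of_nonneg_left (le_of_lt hη) (by positivity)
      linarith
    calc η / (a + ε * η) ≤ η / (ε * η) := this
      _ = 1 / ε := by field_simp
  have h2 : Real.log lam1 - Real.log (a + ε * η) ≤ Real.log (lam1 / a) := by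
    rw [Real.log_div (ne_of_gt hlam1) (ne_of_gt ha)]
    have : Real.log a ≤ Real.log (a + ε * η) :=
      Real.log_le_log ha (by nlinarith)
    linarith
  have h3 : 0 ≤ η / lam1 := by positivity
  have h4 : (r : ℝ) * (Real.log lam1 - Real.log (a + ε * η)) ≤ r * Real.log (lam1 / a) := by
    apply mul_le_mul_of_nonneg_left h2 (by positivity)
  linarith
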